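/- arXiv:1607.03035 — 5 statements merged into one kernel-verified Lean document; each statement's English description precedes it below -/
import Mathlib

section
/- Let p, q > 1 with 1/p + 1/q = 1. Then the convex conjugate of φ_p equals φ_q; that is, for every y ∈ ℝ, sup_{x ∈ ℝ} (x·y − φ_p(x)) = φ_q(y). -/
open Real

/-- The quadratic `N`-function `φ_p`: `φ_p(x) = x²/2` for `|x| ≤ 1` and
`φ_p(x) = (1/p)|x|^p - 1/p + 1/2` for `|x| > 1`. -/
noncomputable def phi (p : ℝ) (x : ℝ) : ℝ :=
  if |x| ≤ 1 then x ^ 2 / 2 else (1 / p) * |x| ^ p - 1 / p + 1 / 2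

/-- Key pointwise Young-type inequality in the case `|x| ≤ 1`. -/
lemma young_phi_small (q : ℝ) (hq : 1 < q) {x y : ℝ} (hx : |x| ≤ 1) :
    x * y ≤ x ^ 2 / 2 + phi q y := by
  have hq0 : 0 < q := by linarith
  have hxy : x * y ≤ |x| * |y| := (le_abs_self _).trans (le_of_eq (abs_mul x y))
  unfold phi
  by_cases hy : |y| ≤ 1
  · rw [if_pos hy]
    nlinarith [sq_nonneg (|x| - |y|), sq_abs x, sq_abs y]
  · rw [if_neg hy]
    push_neg at hy
    -- step 1: |x| * |y| - x^2/2 ≤ |y| - 1/2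
    have h1 : |x| * |y| - x ^ 2 / 2 ≤ |y| - 1 / 2 := by
      nlinarith [mul_nonneg (sub_nonneg.2 hx) (by linarith : (0:ℝ) ≤ |y| - (1 + |x|) / 2),
        sq_abs x]
    -- step 2: Bernoulli
    have h2 : 1 + q * (|y| - 1) ≤ (1 + (|y| - 1)) ^ q :=
      one_add_mul_self_le_rpow_one_add (by linarith) hq.le
    have h2' : q * (|y| - 1) ≤ |y| ^ q - 1 := by
      have : 1 + (|y| - 1) = |y| := by ring
      rw [this] at h2; linarith
    have h3 : |y| - 1 ≤ (1 / q) * |y| ^ q - 1 / q := by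
      have heq : (1 / q) * |y| ^ q - 1 / q = (|y| ^ q - 1) / q := by ring
      rw [heq, le_div_iff₀ hq0]
      nlinarith [h2']
    linarith

lemma young_phi (p q : ℝ) (hp : 1 < p) (hq : 1 < q)
    (hpq : 1 / p + 1 / q = 1) (x y : ℝ) : x * y ≤ phi p x + phi q y := by
  by_cases hx : |x| ≤ 1
  · have := young_phi_small q hq (y := y) hx
    unfold phi; rw [if_pos hx]; unfold phi at this; linarith
  · by_cases hy : |y| ≤ 1
    · have := young_phi_small p hp (x := y) (y := x) hy
      unfold phi; rw [if_neg hx, if_pos hy]; unfold phi at this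
      rw [if_neg hx] at this; linarith
    · have hconj : p.HolderConjugate q := Real.holderConjugate_iff.mpr ⟨hp, by rw [← one_div, ← one_div]; exact hpq⟩
      have := Real.young_inequality x y hconj
      unfold phi; rw [if_neg hx, if_neg hy]
      have hp0 : (0:ℝ) < p := by linarith
      have hq0 : (0:ℝ) < q := by linarith
      have e1 : |x| ^ p / p = (1/p) * |x| ^ p := by ring
      have e2 : |y| ^ q / q = (1/q) * |y| ^ q := by ring
      rw [e1, e2] at this
      linarith

/-- For `p, q > 1` with `1/p + 1/q = 1`, the convex conjugate of `φ_p` is `φ_q`: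
for every `y`, `sup_{x ∈ ℝ} (x·y − φ_p(x)) = φ_q(y)`. -/
theorem conjugate_phi_p_eq_phi_q (p q : ℝ) (hp : 1 < p) (hq : 1 < q)
    (hpq : 1 / p + 1 / q = 1) (y : ℝ) :
    (⨆ x : ℝ, (x * y - phi p x)) = phi q y := by
  have hub : ∀ x : ℝ, x * y - phi p x ≤ phi q y := fun x => by
    have := young_phi p q hp hq hpq x y; linarith
  have hbdd : BddAbove (Set.range fun x : ℝ => x * y - phi p x) :=
    ⟨phi q y, by rintro _ ⟨x, rfl⟩; exact hub x⟩
  refine le_antisymm (ciSup_le hub) ?_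
  by_cases hy : |y| ≤ 1
  · have hval : y * y - phi p y = phi q y := by
      unfold phi; rw [if_pos hy, if_pos hy]; ring
    calc phi q y = y * y - phi p y := hval.symm
      _ ≤ _ := le_ciSup hbdd y
  · push_neg at hy
    have hy0 : (0:ℝ) < |y| := by linarith
    have hp0 : (0:ℝ) < p := by linarith
    have hq0 : (0:ℝ) < q := by linarith
    set x := y * |y| ^ (q - 2) with hxdef
    have hax : |x| = |y| ^ (q - 1) := by
      rw [hxdef, abs_mul, abs_rpow_of_nonneg (abs_nonneg y), abs_abs,
        ← Real.rpow_one_add' (abs_nonneg y) (by intro h; linarith [h])]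
      ring_nf
    have haxp : 1 < |x| := by
      rw [hax]
      exact Real.one_lt_rpow_iff_of_pos hy0 |>.2 (Or.inl ⟨hy, by linarith⟩)
    have hqp : (q - 1) * p = q := by
      field_simp at hpq
      nlinarith [hpq]
    have hxq : |x| ^ p = |y| ^ q := by
      rw [hax, ← Real.rpow_mul (abs_nonneg y), hqp]
    have hxy : x * y = |y| ^ q := by
      rw [hxdef]
      have : y * |y| ^ (q - 2) * y = |y| ^ 2 * |y| ^ (q - 2) := by
        rw [sq_abs]; ring
      rw [this, ← Real.rpow_natCast |y| 2, ← Real.rpow_add hy0]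
      norm_num
    have hval : x * y - phi p x = phi q y := by
      unfold phi
      rw [if_neg (not_le.2 haxp), if_neg (not_le.2 hy), hxy, hxq]
      linear_combination (1 - |y| ^ q) * hpq
    calc phi q y = x * y - phi p x := hval.symm
      _ ≤ _ := le_ciSup hbdd x
end

section
/- (Main Theorem) Let p > 1 and let (ξ_n)_{n≥1} be a sequence of real random variables on a common probability space with τ_{φ_p}(ξ_n) < ∞ for each n. Suppose there exist positive constants c and α such that for every natural number n, τ_{φ_p}(∑_{i=1}^n ξ_i) ≤ c·n^{1−α}. Then n^{−1} ∑_{i=1}^n ξ_i converges to 0 almost surely as n → ∞. -/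
open MeasureTheory Real Filter

/-- The set of admissible constants in the definition of the `φ`-subgaussian standard:
`{a ≥ 0 : ∀ λ, ln E exp(λξ) ≤ φ(aλ)}` (the exponentiated form of the inequality also
encodes finiteness of `E exp(λξ)`). -/
def subSet {Ω : Type*} [MeasurableSpace Ω] (μ : Measure Ω) (φ : ℝ → ℝ) (ξ : Ω → ℝ) :
    Set ℝ :=
  {a | 0 ≤ a ∧ ∀ l : ℝ,
    ∫⁻ ω, ENNReal.ofReal (Real.exp (l * ξ ω)) ∂μ ≤ ENNReal.ofReal (Real.exp (φ (a * l)))}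

/-- The `φ`-subgaussian standard (norm) `τ_φ(ξ)`. -/
noncomputable def tau {Ω : Type*} [MeasurableSpace Ω] (μ : Measure Ω) (φ : ℝ → ℝ)
    (ξ : Ω → ℝ) : ℝ :=
  sInf (subSet μ φ ξ)

lemma phi_even (p x : ℝ) : phi p (-x) = phi p x := by
  simp only [phi, abs_neg, neg_sq]

lemma phi_le_half (p : ℝ) {x : ℝ} (hx : |x| ≤ 1) : phi p x ≤ 1 / 2 := by
  rw [phi, if_pos hx]
  nlinarith [sq_abs x, abs_nonneg x]

/-- Chernoff-type tail bound from a membership in `subSet`. -/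
lemma chernoff_tail {Ω : Type*} [MeasurableSpace Ω] {μ : Measure Ω} (p : ℝ) {f : Ω → ℝ}
    (hf : Measurable f) {a : ℝ} (ha : a ∈ subSet μ (phi p) f) (t : ℝ) :
    μ {ω | t ≤ f ω} ≤ ENNReal.ofReal (Real.exp (1 / 2 - t / (a + 1))) := by
  obtain ⟨ha0, hmgf⟩ := ha
  have hapos : (0 : ℝ) < a + 1 := by linarith
  set l : ℝ := 1 / (a + 1) with hl
  have hlpos : 0 < l := by positivity
  have hmeas : AEMeasurable (fun ω => ENNReal.ofReal (Real.exp (l * f ω))) μ :=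
    ((hf.const_mul l).exp).ennreal_ofReal.aemeasurable
  have key : ENNReal.ofReal (Real.exp (l * t)) * μ {ω | t ≤ f ω} ≤
      ENNReal.ofReal (Real.exp (phi p (a * l))) := by
    calc ENNReal.ofReal (Real.exp (l * t)) * μ {ω | t ≤ f ω}
        ≤ ENNReal.ofReal (Real.exp (l * t)) *
            μ {ω | ENNReal.ofReal (Real.exp (l * t)) ≤ ENNReal.ofReal (Real.exp (l * f ω))} := by
          gcongr
          intro hω
          exact ENNReal.ofReal_le_ofReal (Real.exp_le_exp.2 (by
            exact mul_le_mul_of_nonneg_left hω hlpos.le))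
      _ ≤ ∫⁻ ω, ENNReal.ofReal (Real.exp (l * f ω)) ∂μ :=
          mul_meas_ge_le_lintegral₀ hmeas _
      _ ≤ ENNReal.ofReal (Real.exp (phi p (a * l))) := hmgf l
  have hdiv : μ {ω | t ≤ f ω} ≤
      ENNReal.ofReal (Real.exp (phi p (a * l))) / ENNReal.ofReal (Real.exp (l * t)) := by
    rw [ENNReal.le_div_iff_mul_le (Or.inl (by positivity)) (Or.inl ENNReal.ofReal_ne_top)]
    rw [mul_comm]
    exact key
  refine hdiv.trans ?_
  rw [← ENNReal.ofReal_div_of_pos (Real.exp_pos _), ← Real.exp_sub]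
  apply ENNReal.ofReal_le_ofReal
  apply Real.exp_le_exp.2
  have h1 : |a * l| ≤ 1 := by
    rw [hl, abs_of_nonneg (by positivity)]
    rw [mul_one_div, div_le_one hapos]
    linarith
  have h2 : phi p (a * l) ≤ 1 / 2 := phi_le_half p h1
  have h3 : l * t = t / (a + 1) := by rw [hl]; ring
  linarith

lemma subSet_neg {Ω : Type*} [MeasurableSpace Ω] {μ : Measure Ω} (p : ℝ) {f : Ω → ℝ}
    {a : ℝ} (ha : a ∈ subSet μ (phi p) f) : a ∈ subSet μ (phi p) (fun ω => -f ω) := by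
  refine ⟨ha.1, fun l => ?_⟩
  have h1 : ∀ ω, l * (-f ω) = (-l) * f ω := fun ω => by ring
  simp_rw [h1]
  have h2 : phi p (a * l) = phi p (a * (-l)) := by rw [mul_neg, phi_even]
  rw [h2]
  exact ha.2 (-l)

lemma abs_tail {Ω : Type*} [MeasurableSpace Ω] {μ : Measure Ω} (p : ℝ) {f : Ω → ℝ}
    (hf : Measurable f) {a : ℝ} (ha : a ∈ subSet μ (phi p) f) (t : ℝ) :
    μ {ω | t ≤ |f ω|} ≤ 2 * ENNReal.ofReal (Real.exp (1 / 2 - t / (a + 1))) := by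
  have hsub : {ω | t ≤ |f ω|} ⊆ {ω | t ≤ f ω} ∪ {ω | t ≤ -f ω} := by
    intro ω hω
    have hω' : t ≤ |f ω| := hω
    rcases le_abs.1 hω' with h | h
    · exact Or.inl h
    · exact Or.inr h
  calc μ {ω | t ≤ |f ω|} ≤ μ ({ω | t ≤ f ω} ∪ {ω | t ≤ -f ω}) := measure_mono hsub
    _ ≤ μ {ω | t ≤ f ω} + μ {ω | t ≤ -f ω} := measure_union_le _ _
    _ ≤ ENNReal.ofReal (Real.exp (1 / 2 - t / (a + 1))) +
        ENNReal.ofReal (Real.exp (1 / 2 - t / (a + 1))) :=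
      add_le_add (chernoff_tail p hf ha t) (chernoff_tail p hf.neg (subSet_neg p ha) t)
    _ = 2 * ENNReal.ofReal (Real.exp (1 / 2 - t / (a + 1))) := (two_mul _).symm

lemma summable_exp_neg_rpow {δ β : ℝ} (hδ : 0 < δ) (hβ : 0 < β) :
    Summable (fun n : ℕ => Real.exp (-(δ * (n : ℝ) ^ β))) := by
  have hg : Summable (fun n : ℕ => 1 / (n : ℝ) ^ (2 : ℝ)) :=
    Real.summable_one_div_nat_rpow.2 (by norm_num)
  refine summable_of_isBigO_nat hg (Asymptotics.IsBigO.of_bound 1 ?_)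
  have hlog := (isLittleO_log_rpow_atTop hβ).bound (show (0:ℝ) < δ / 2 by positivity)
  have hx : ∀ᶠ x : ℝ in atTop, Real.exp (-(δ * x ^ β)) ≤ 1 / x ^ (2 : ℝ) := by
    filter_upwards [hlog, eventually_ge_atTop (1 : ℝ)] with x hb hx1
    have hxpos : (0 : ℝ) < x := by linarith
    have hlx : Real.log x ≤ δ / 2 * x ^ β := by
      have := hb
      rwa [Real.norm_eq_abs, Real.norm_eq_abs, abs_of_nonneg (Real.log_nonneg hx1),
        abs_of_nonneg (Real.rpow_nonneg hxpos.le β)] at this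
    have hxx : x ^ (2 : ℝ) = Real.exp (2 * Real.log x) := by
      rw [← Real.log_rpow hxpos, Real.exp_log (Real.rpow_pos_of_pos hxpos _)]
    rw [hxx, one_div, ← Real.exp_neg]
    exact Real.exp_le_exp.2 (by linarith)
  have hn := (tendsto_natCast_atTop_atTop (R := ℝ)).eventually hx
  filter_upwards [hn, eventually_ge_atTop 1] with n h hn1
  have hnpos : (0 : ℝ) < (n : ℝ) := by exact_mod_cast hn1
  rw [Real.norm_eq_abs, Real.norm_eq_abs, abs_of_nonneg (Real.exp_pos _).le,
    abs_of_nonneg (by positivity)]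
  linarith

/-- Main theorem: if `(ξ_n) ⊂ Sub_{φ_p}` for some `p > 1` and there are constants
`c, α > 0` such that `τ_{φ_p}(∑_{i=1}^n ξ_i) ≤ c·n^{1−α}` for every `n`, then
`n⁻¹ ∑_{i=1}^n ξ_i → 0` almost surely. -/
theorem slln_phi_subgaussian
    {Ω : Type*} [MeasurableSpace Ω] (μ : Measure Ω) [IsProbabilityMeasure μ]
    (p : ℝ) (hp : 1 < p)
    (ξ : ℕ → Ω → ℝ) (hmeas : ∀ n, Measurable (ξ n))
    (hsub : ∀ n, (subSet μ (phi p) (ξ n)).Nonempty)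
    (hsubsum : ∀ n : ℕ, 1 ≤ n → (subSet μ (phi p) (fun ω => ∑ i ∈ Finset.Icc 1 n, ξ i ω)).Nonempty)
    (c α : ℝ) (hc : 0 < c) (hα : 0 < α)
    (hτ : ∀ n : ℕ, 1 ≤ n →
      tau μ (phi p) (fun ω => ∑ i ∈ Finset.Icc 1 n, ξ i ω) ≤ c * (n : ℝ) ^ ((1 : ℝ) - α)) :
    ∀ᵐ ω ∂μ, Tendsto (fun n : ℕ => (n : ℝ)⁻¹ * ∑ i ∈ Finset.Icc 1 n, ξ i ω)
      atTop (nhds 0) := by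
  set S : ℕ → Ω → ℝ := fun n ω => ∑ i ∈ Finset.Icc 1 n, ξ i ω with hS
  have hSmeas : ∀ n, Measurable (S n) := fun n =>
    Finset.measurable_sum _ fun i _ => hmeas i
  -- choose admissible constants close to the infimum
  have hchoice : ∀ n : ℕ, 1 ≤ n → ∃ a : ℝ,
      a ∈ subSet μ (phi p) (S n) ∧ a < c * (n : ℝ) ^ ((1 : ℝ) - α) + 1 := by
    intro n hn
    have h1 : tau μ (phi p) (S n) < c * (n : ℝ) ^ ((1 : ℝ) - α) + 1 :=
      lt_of_le_of_lt (hτ n hn) (lt_add_one _)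
    exact exists_lt_of_csInf_lt (hsubsum n hn) h1
  set β : ℝ := min α 1 with hβdef
  have hβpos : 0 < β := lt_min hα one_pos
  have hβle1 : β ≤ 1 := min_le_right _ _
  have hβleα : β ≤ α := min_le_left _ _
  -- for each k, a Borel–Cantelli argument
  have hk : ∀ k : ℕ, ∀ᵐ ω ∂μ, ∀ᶠ n in atTop,
      ω ∉ {ω | 1 / ((k : ℝ) + 1) * n ≤ |S n ω|} := by
    intro k
    set ε : ℝ := 1 / ((k : ℝ) + 1) with hε
    have hεpos : 0 < ε := by positivity
    set δ : ℝ := ε / (c + 2) with hδ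
    have hδpos : 0 < δ := by positivity
    apply ae_eventually_notMem
    have hbound : ∀ n : ℕ,
        μ {ω | ε * n ≤ |S n ω|} ≤ 2 * ENNReal.ofReal (Real.exp (1 / 2 - δ * (n : ℝ) ^ β)) := by
      intro n
      rcases Nat.eq_zero_or_pos n with rfl | hn
      · -- n = 0 : bound the measure by 1
        have h1 : μ {ω | ε * (0 : ℕ) ≤ |S 0 ω|} ≤ 1 := prob_le_one
        refine h1.trans ?_
        have h2 : ((0 : ℕ) : ℝ) ^ β = 0 := by
          simp [Real.zero_rpow hβpos.ne']
        rw [h2, mul_zero, sub_zero]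
        calc (1 : ENNReal) = ENNReal.ofReal 1 := by simp
          _ ≤ ENNReal.ofReal (Real.exp (1 / 2)) :=
              ENNReal.ofReal_le_ofReal (Real.one_le_exp (by norm_num))
          _ ≤ 2 * ENNReal.ofReal (Real.exp (1 / 2)) :=
              le_mul_of_one_le_left (zero_le ..) one_le_two
      · obtain ⟨a, haS, halt⟩ := hchoice n hn
        have ha0 : 0 ≤ a := haS.1
        have hn1 : (1 : ℝ) ≤ (n : ℝ) := by exact_mod_cast hn
        have hnpos : (0 : ℝ) < (n : ℝ) := by linarith
        refine (abs_tail p (hSmeas n) haS (ε * n)).trans ?_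
        apply mul_le_mul_right
        apply ENNReal.ofReal_le_ofReal
        apply Real.exp_le_exp.2
        apply sub_le_sub_left
        -- δ * n^β ≤ ε * n / (a + 1)
        have hA : a + 1 ≤ (c + 2) * (n : ℝ) ^ ((1 : ℝ) - β) := by
          have h1 : (n : ℝ) ^ ((1 : ℝ) - α) ≤ (n : ℝ) ^ ((1 : ℝ) - β) :=
            Real.rpow_le_rpow_of_exponent_le hn1 (by linarith)
          have h2 : (1 : ℝ) ≤ (n : ℝ) ^ ((1 : ℝ) - β) := by
            calc (1 : ℝ) = (n : ℝ) ^ (0 : ℝ) := by rw [Real.rpow_zero]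
              _ ≤ (n : ℝ) ^ ((1 : ℝ) - β) :=
                Real.rpow_le_rpow_of_exponent_le hn1 (by linarith)
          nlinarith
        have hApos : (0 : ℝ) < a + 1 := by linarith
        have hBpos : (0 : ℝ) < (c + 2) * (n : ℝ) ^ ((1 : ℝ) - β) := by
          have := Real.rpow_pos_of_pos hnpos ((1 : ℝ) - β)
          positivity
        have hnn : (n : ℝ) ^ β * (n : ℝ) ^ ((1 : ℝ) - β) = (n : ℝ) := by
          rw [← Real.rpow_add hnpos]
          norm_num
        have heq : ε * n / ((c + 2) * (n : ℝ) ^ ((1 : ℝ) - β)) = δ * (n : ℝ) ^ β := by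
          have hδε : δ * (c + 2) = ε := by rw [hδ]; field_simp
          rw [div_eq_iff hBpos.ne']
          calc ε * n = ε * ((n : ℝ) ^ β * (n : ℝ) ^ ((1 : ℝ) - β)) := by rw [hnn]
            _ = δ * (n : ℝ) ^ β * ((c + 2) * (n : ℝ) ^ ((1 : ℝ) - β)) := by
                rw [← hδε]; ring
        calc δ * (n : ℝ) ^ β = ε * n / ((c + 2) * (n : ℝ) ^ ((1 : ℝ) - β)) := heq.symm
          _ ≤ ε * n / (a + 1) := by
              apply div_le_div_of_nonneg_left (by positivity) hApos hA
    -- summability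
    have hsumf : Summable (fun n : ℕ => Real.exp (1 / 2 - δ * (n : ℝ) ^ β)) := by
      have h1 := (summable_exp_neg_rpow hδpos hβpos).mul_left (Real.exp (1 / 2))
      refine h1.congr fun n => ?_
      rw [← Real.exp_add, sub_eq_add_neg]
    have htsum : ∑' n : ℕ, μ {ω | ε * n ≤ |S n ω|} ≠ ⊤ := by
      have h1 : ∑' n : ℕ, μ {ω | ε * n ≤ |S n ω|} ≤
          ∑' n : ℕ, 2 * ENNReal.ofReal (Real.exp (1 / 2 - δ * (n : ℝ) ^ β)) :=
        ENNReal.tsum_le_tsum hbound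
      have h2 : ∑' n : ℕ, 2 * ENNReal.ofReal (Real.exp (1 / 2 - δ * (n : ℝ) ^ β)) =
          2 * ENNReal.ofReal (∑' n : ℕ, Real.exp (1 / 2 - δ * (n : ℝ) ^ β)) := by
        rw [ENNReal.tsum_mul_left,
          ENNReal.ofReal_tsum_of_nonneg (fun n => (Real.exp_pos _).le) hsumf]
      refine ne_top_of_le_ne_top ?_ h1
      rw [h2]
      exact ENNReal.mul_ne_top (by norm_num) ENNReal.ofReal_ne_top
    exact htsum
  rw [← ae_all_iff] at hk
  filter_upwards [hk] with ω hω
  rw [Metric.tendsto_atTop]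
  intro e he
  obtain ⟨k, hke⟩ := exists_nat_one_div_lt he
  have hωk := hω k
  rw [eventually_atTop] at hωk
  obtain ⟨N, hN⟩ := hωk
  refine ⟨max N 1, fun n hn => ?_⟩
  have hnN : N ≤ n := le_trans (le_max_left _ _) hn
  have hn1 : 1 ≤ n := le_trans (le_max_right _ _) hn
  have hn1' : (1 : ℝ) ≤ (n : ℝ) := by exact_mod_cast hn1
  have hnpos : (0 : ℝ) < (n : ℝ) := by linarith
  have habs : |S n ω| < 1 / ((k : ℝ) + 1) * n := by
    have := hN n hnN
    simp only [Set.mem_setOf_eq, not_le] at this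
    exact this
  rw [Real.dist_eq, sub_zero]
  show |(n : ℝ)⁻¹ * S n ω| < e
  have habs2 : |(n : ℝ)⁻¹ * S n ω| = (n : ℝ)⁻¹ * |S n ω| := by
    rw [abs_mul, abs_inv, abs_of_nonneg hnpos.le]
  rw [habs2]
  calc (n : ℝ)⁻¹ * |S n ω| < (n : ℝ)⁻¹ * (1 / ((k : ℝ) + 1) * n) := by
        apply mul_lt_mul_of_pos_left habs (by positivity)
    _ = 1 / ((k : ℝ) + 1) := by field_simp
    _ < e := hke
end

section
/- Let p > 1 and q > 1 with 1/p + 1/q = 1, and let (ξ_n)_{n≥1} be a sequence of real random variables with τ_{φ_p}(ξ_n) < ∞ for each n. Suppose there exist positive constants c and α such that for every natural number n, τ_{φ_p}(∑_{i=1}^n ξ_i) ≤ c·n^{1−α}. Then for every ε > 0 and every natural number n with n > (c/ε)^{1/α}, P(|∑_{i=1}^n ξ_i| ≥ nε) ≤ 2 exp(1/q − 1/2) · exp(−n^{qα} (1/q) (ε/c)^q). -/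
open MeasureTheory Real Filter

/-- `phi p` is monotone with respect to absolute value. -/
lemma phi_mono {p : ℝ} (hp : 1 < p) {x y : ℝ} (h : |x| ≤ |y|) : phi p x ≤ phi p y := by
  have hp0 : 0 < p := lt_trans one_pos hp
  unfold phi
  by_cases hy : |y| ≤ 1
  · have hx : |x| ≤ 1 := h.trans hy
    rw [if_pos hx, if_pos hy]
    nlinarith [sq_abs x, sq_abs y, abs_nonneg x, abs_nonneg y]
  · push_neg at hy
    rw [if_neg (not_le.2 hy)]
    by_cases hx : |x| ≤ 1
    · rw [if_pos hx]
      have h1 : (1 : ℝ) ≤ |y| ^ p := Real.one_le_rpow hy.le hp0.le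
      have h2 : x ^ 2 ≤ 1 := by nlinarith [sq_abs x, abs_nonneg x]
      have h3 : (0 : ℝ) < 1 / p := by positivity
      nlinarith
    · push_neg at hx
      rw [if_neg (not_le.2 hx)]
      have h1 : |x| ^ p ≤ |y| ^ p := Real.rpow_le_rpow (abs_nonneg x) h hp0.le
      have h3 : (0 : ℝ) < 1 / p := by positivity
      nlinarith

/-- Key moment bound: if `τ ≤ a₀` and `a₀|l| > 1`, then the moment generating bound
holds at `a₀` with the explicit power-branch expression of `phi`. -/
lemma key_moment_bound {Ω : Type*} [MeasurableSpace Ω] (μ : Measure Ω) {p : ℝ} (hp : 1 < p)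
    (S : Ω → ℝ) (hne : (subSet μ (phi p) S).Nonempty)
    {a0 l : ℝ} (ha0 : 0 < a0) (htau : tau μ (phi p) S ≤ a0)
    (hl : 1 < a0 * |l|) :
    ∫⁻ ω, ENNReal.ofReal (Real.exp (l * S ω)) ∂μ ≤
      ENNReal.ofReal (Real.exp ((1 / p) * (a0 * |l|) ^ p - 1 / p + 1 / 2)) := by
  have hl0 : 0 < |l| := by
    rcases lt_or_ge 0 (|l|) with h | h
    · exact h
    · exfalso; nlinarith
  have hF : Tendsto (fun δ : ℝ =>
      ENNReal.ofReal (Real.exp ((1 / p) * ((a0 + δ) * |l|) ^ p - 1 / p + 1 / 2)))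
      (nhdsWithin 0 (Set.Ioi 0))
      (nhds (ENNReal.ofReal (Real.exp ((1 / p) * (a0 * |l|) ^ p - 1 / p + 1 / 2)))) := by
    apply ENNReal.tendsto_ofReal
    apply (Real.continuous_exp.tendsto _).comp
    have h1 : Tendsto (fun δ : ℝ => (a0 + δ) * |l|) (nhdsWithin 0 (Set.Ioi 0))
        (nhds (a0 * |l|)) := by
      have : Tendsto (fun δ : ℝ => (a0 + δ) * |l|) (nhds 0) (nhds ((a0 + 0) * |l|)) :=
        ((continuous_const.add continuous_id).mul continuous_const).tendsto 0
      simpa using this.mono_left nhdsWithin_le_nhds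
    have h2 := h1.rpow_const (p := p) (Or.inr (le_of_lt (lt_trans one_pos hp)))
    exact ((h2.const_mul (1 / p)).sub_const (1 / p)).add_const (1 / 2)
  refine ge_of_tendsto hF ?_
  filter_upwards [self_mem_nhdsWithin] with δ hδ
  have hδ0 : (0 : ℝ) < δ := hδ
  obtain ⟨a, ha, halt⟩ := Real.lt_sInf_add_pos hne hδ0
  have hbound := ha.2 l
  refine hbound.trans ?_
  apply ENNReal.ofReal_le_ofReal
  apply Real.exp_le_exp.2
  have hpos : (0:ℝ) ≤ (a0 + δ) * |l| := by positivity
  have habs : |a * l| ≤ |(a0 + δ) * abs l| := by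
    rw [abs_mul, abs_of_nonneg hpos, abs_of_nonneg ha.1]
    have : a ≤ a0 + δ := by
      have : sInf (subSet μ (phi p) S) ≤ a0 := htau
      linarith
    exact mul_le_mul_of_nonneg_right this (abs_nonneg l)
  have := phi_mono hp habs
  refine this.trans ?_
  have hgt : ¬ |(a0 + δ) * abs l| ≤ 1 := by
    rw [abs_of_nonneg hpos]
    push_neg
    nlinarith
  rw [phi, if_neg hgt, abs_of_nonneg hpos]

/-- Chernoff step. -/
lemma chernoff_step {Ω : Type*} [MeasurableSpace Ω] (μ : Measure Ω) (S : Ω → ℝ)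
    (hS : Measurable S) {l t B : ℝ} (hl : 0 < l)
    (h : ∫⁻ ω, ENNReal.ofReal (Real.exp (l * S ω)) ∂μ ≤ ENNReal.ofReal (Real.exp B)) :
    μ {ω | t ≤ S ω} ≤ ENNReal.ofReal (Real.exp (B - l * t)) := by
  set f : Ω → ENNReal := fun ω => ENNReal.ofReal (Real.exp (l * S ω)) with hf
  have hfm : AEMeasurable f μ :=
    ((Real.measurable_exp.comp (measurable_const.mul hS)).ennreal_ofReal).aemeasurable
  have hmul := mul_meas_ge_le_lintegral₀ hfm (ENNReal.ofReal (Real.exp (l * t)))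
  have hsub : {ω | t ≤ S ω} ⊆ {ω | ENNReal.ofReal (Real.exp (l * t)) ≤ f ω} := by
    intro ω hω
    exact ENNReal.ofReal_le_ofReal (Real.exp_le_exp.2 (mul_le_mul_of_nonneg_left hω hl.le))
  have hchain : ENNReal.ofReal (Real.exp (l * t)) * μ {ω | t ≤ S ω} ≤
      ENNReal.ofReal (Real.exp B) :=
    le_trans (mul_le_mul_right (measure_mono hsub) _) (hmul.trans h)
  have hne : ENNReal.ofReal (Real.exp (l * t)) ≠ 0 := by
    simp [ENNReal.ofReal_eq_zero, not_le, Real.exp_pos]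
  have hdiv : μ {ω | t ≤ S ω} ≤ ENNReal.ofReal (Real.exp B) / ENNReal.ofReal (Real.exp (l * t)) := by
    rw [ENNReal.le_div_iff_mul_le (Or.inl hne) (Or.inl ENNReal.ofReal_ne_top)]
    rwa [mul_comm]
  refine hdiv.trans ?_
  rw [← ENNReal.ofReal_div_of_pos (Real.exp_pos _), ← Real.exp_sub]

/-- Quantitative tail bound in the main theorem: under the assumption
`τ_{φ_p}(∑_{i=1}^n ξ_i) ≤ c·n^{1−α}`, for every `ε > 0` and every `n > (c/ε)^{1/α}`,
`P(|∑_{i=1}^n ξ_i| ≥ nε) ≤ 2 exp(1/q − 1/2) exp(−n^{qα}(1/q)(ε/c)^q)`. -/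
theorem tail_bound_partial_sums
    {Ω : Type*} [MeasurableSpace Ω] (μ : Measure Ω) [IsProbabilityMeasure μ]
    (p q : ℝ) (hp : 1 < p) (hq : 1 < q) (hpq : 1 / p + 1 / q = 1)
    (ξ : ℕ → Ω → ℝ) (hmeas : ∀ n, Measurable (ξ n))
    (hsub : ∀ n, (subSet μ (phi p) (ξ n)).Nonempty)
    (hsubsum : ∀ n : ℕ, 1 ≤ n → (subSet μ (phi p) (fun ω => ∑ i ∈ Finset.Icc 1 n, ξ i ω)).Nonempty)
    (c α : ℝ) (hc : 0 < c) (hα : 0 < α)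
    (hτ : ∀ n : ℕ, 1 ≤ n →
      tau μ (phi p) (fun ω => ∑ i ∈ Finset.Icc 1 n, ξ i ω) ≤ c * (n : ℝ) ^ ((1 : ℝ) - α))
    (ε : ℝ) (hε : 0 < ε) (n : ℕ) (hn1 : 1 ≤ n) (hn : (c / ε) ^ (1 / α) < (n : ℝ)) :
    μ {ω | (n : ℝ) * ε ≤ |∑ i ∈ Finset.Icc 1 n, ξ i ω|} ≤
      ENNReal.ofReal (2 * Real.exp (1 / q - 1 / 2) *
        Real.exp (-((n : ℝ) ^ (q * α) * (1 / q) * (ε / c) ^ q))) := by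
  have hp0 : 0 < p := lt_trans one_pos hp
  have hq0 : 0 < q := lt_trans one_pos hq
  have hn0 : (0 : ℝ) < n := by exact_mod_cast hn1
  set S : Ω → ℝ := fun ω => ∑ i ∈ Finset.Icc 1 n, ξ i ω with hS
  have hSm : Measurable S := Finset.measurable_sum _ fun i _ => hmeas i
  set a0 : ℝ := c * (n : ℝ) ^ ((1 : ℝ) - α) with ha0def
  have ha0 : 0 < a0 := by positivity
  set t : ℝ := (n : ℝ) * ε with htdef
  set m : ℝ := (ε / c) * (n : ℝ) ^ α with hmdef
  -- n^α > c/ε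
  have hna : c / ε < (n : ℝ) ^ α := by
    have h0 : (0 : ℝ) ≤ c / ε := by positivity
    have := Real.rpow_lt_rpow (Real.rpow_nonneg h0 _) hn hα
    rwa [← Real.rpow_mul h0, one_div, inv_mul_cancel₀ (ne_of_gt hα), Real.rpow_one] at this
  have hm1 : 1 < m := by
    have h1 : (ε / c) * (c / ε) < (ε / c) * (n : ℝ) ^ α :=
      mul_lt_mul_of_pos_left hna (by positivity)
    have h2 : (ε / c) * (c / ε) = 1 := by field_simp
    rw [hmdef]; linarith
  have hm0 : 0 < m := lt_trans one_pos hm1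
  have hat : a0 * m = t := by
    rw [ha0def, hmdef, htdef]
    have : (n : ℝ) ^ ((1 : ℝ) - α) * (n : ℝ) ^ α = (n : ℝ) := by
      rw [← Real.rpow_add hn0]; simp
    field_simp
    linear_combination this
  set lam : ℝ := m ^ (q - 1) / a0 with hlamdef
  have hlam0 : 0 < lam := by
    have := Real.rpow_pos_of_pos hm0 (q - 1)
    positivity
  have hkeyprod : a0 * |lam| = m ^ (q - 1) := by
    rw [abs_of_pos hlam0, hlamdef]
    field_simp
  have hgt1 : 1 < a0 * |lam| := by
    rw [hkeyprod]
    exact Real.one_lt_rpow_iff_of_pos hm0 |>.2 (Or.inl ⟨hm1, by linarith⟩)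
  -- arithmetic identities
  have hqp : (q - 1) * p = q := by
    have hpne : p ≠ 0 := ne_of_gt hp0
    have hqne : q ≠ 0 := ne_of_gt hq0
    field_simp at hpq
    nlinarith [hpq]
  have hmp : (m ^ (q - 1)) ^ p = m ^ q := by
    rw [← Real.rpow_mul hm0.le, hqp]
  have hlt : lam * t = m ^ q := by
    have h1 : lam * t = m ^ (q - 1) * m := by
      rw [hlamdef, ← hat]; field_simp
    rw [h1, ← Real.rpow_add_one (ne_of_gt hm0)]
    norm_num
  have hB : (1 / p) * (a0 * |lam|) ^ p - 1 / p + 1 / 2 - lam * t =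
      (1 / q - 1 / 2) - (1 / q) * m ^ q := by
    rw [hkeyprod, hmp, hlt]
    have h1p : 1 / p = 1 - 1 / q := by linarith
    rw [h1p]; ring
  have hmq : m ^ q = (n : ℝ) ^ (q * α) * (ε / c) ^ q := by
    rw [hmdef, Real.mul_rpow (by positivity) (Real.rpow_nonneg hn0.le _),
      ← Real.rpow_mul hn0.le, mul_comm α q]
    ring
  -- moment bounds
  have hne := hsubsum n hn1
  have htau := hτ n hn1
  have Hpos := key_moment_bound μ hp S hne ha0 htau hgt1
  have Hneg : ∫⁻ ω, ENNReal.ofReal (Real.exp (lam * (-S ω))) ∂μ ≤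
      ENNReal.ofReal (Real.exp ((1 / p) * (a0 * |lam|) ^ p - 1 / p + 1 / 2)) := by
    have h := key_moment_bound μ hp S hne ha0 htau (l := -lam) (by rwa [abs_neg])
    rw [abs_neg] at h
    simpa [neg_mul, mul_neg] using h
  have C1 := chernoff_step μ S hSm hlam0 Hpos (t := t)
  have C2 := chernoff_step μ (fun ω => -S ω) hSm.neg hlam0 Hneg (t := t)
  have hunion : {ω | t ≤ |S ω|} ⊆ {ω | t ≤ S ω} ∪ {ω | t ≤ -S ω} := by
    intro ω hω
    simp only [Set.mem_setOf_eq] at hω ⊢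
    rcases le_abs.mp hω with h | h
    · exact Or.inl h
    · exact Or.inr h
  calc μ {ω | (n : ℝ) * ε ≤ |∑ i ∈ Finset.Icc 1 n, ξ i ω|}
      ≤ μ ({ω | t ≤ S ω} ∪ {ω | t ≤ -S ω}) := measure_mono hunion
    _ ≤ μ {ω | t ≤ S ω} + μ {ω | t ≤ -S ω} := measure_union_le _ _
    _ ≤ ENNReal.ofReal (Real.exp ((1 / p) * (a0 * |lam|) ^ p - 1 / p + 1 / 2 - lam * t)) +
        ENNReal.ofReal (Real.exp ((1 / p) * (a0 * |lam|) ^ p - 1 / p + 1 / 2 - lam * t)) :=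
        add_le_add C1 C2
    _ = ENNReal.ofReal (2 * Real.exp ((1 / q - 1 / 2) - (1 / q) * m ^ q)) := by
        rw [← ENNReal.ofReal_add (Real.exp_nonneg _) (Real.exp_nonneg _), hB, ← two_mul]
    _ = ENNReal.ofReal (2 * Real.exp (1 / q - 1 / 2) *
        Real.exp (-((n : ℝ) ^ (q * α) * (1 / q) * (ε / c) ^ q))) := by
        rw [mul_assoc, ← Real.exp_add, hmq]
        congr 2
        ring
end

section
/- For p > 1 and r = min{p, 2}, the function x ↦ φ_p(|x|^{1/r}) is convex on ℝ. -/
open Real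

lemma phi_rpow_left {p r t : ℝ} (hr0 : 0 < r) (ht0 : 0 ≤ t) (ht1 : t ≤ 1) :
    phi p (t ^ (1 / r)) = t ^ (2 / r) / 2 := by
  have hu0 : 0 ≤ t ^ (1 / r) := Real.rpow_nonneg ht0 _
  have hu1 : t ^ (1 / r) ≤ 1 := Real.rpow_le_one ht0 ht1 (by positivity)
  rw [phi, if_pos (by rwa [abs_of_nonneg hu0])]
  rw [← Real.rpow_natCast (t ^ (1 / r)) 2, ← Real.rpow_mul ht0]
  norm_num
  rw [show r⁻¹ * 2 = 2 / r by ring]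

lemma phi_rpow_right {p r t : ℝ} (hr0 : 0 < r) (hp0 : 0 < p) (ht1 : 1 ≤ t) :
    phi p (t ^ (1 / r)) = 1 / p * t ^ (p / r) - 1 / p + 1 / 2 := by
  have ht0 : (0:ℝ) ≤ t := le_trans zero_le_one ht1
  rcases eq_or_lt_of_le ht1 with h | h
  · subst h
    rw [Real.one_rpow, Real.one_rpow, phi]
    norm_num
  · have hu1 : 1 < t ^ (1 / r) := by
      calc (1:ℝ) = 1 ^ (1 / r) := (Real.one_rpow _).symm
      _ < t ^ (1 / r) := Real.rpow_lt_rpow zero_le_one h (by positivity)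
    have hu0 : 0 ≤ t ^ (1 / r) := Real.rpow_nonneg ht0 _
    rw [phi, if_neg (by rw [abs_of_nonneg hu0]; exact not_le.2 hu1),
      abs_of_nonneg hu0, ← Real.rpow_mul ht0]
    rw [show 1 / r * p = p / r by ring]

/-- For `p > 1` and `r = min{p, 2}`, the function `x ↦ φ_p(|x|^{1/r})` is convex on `ℝ`. -/
theorem convexOn_phi_abs_rpow (p r : ℝ) (hp : 1 < p) (hr : r = min p 2) :
    ConvexOn ℝ Set.univ (fun x : ℝ => phi p (|x| ^ (1 / r))) := by
  have hr1 : 1 < r := by rw [hr]; exact lt_min hp one_lt_two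
  have hr0 : 0 < r := lt_trans one_pos hr1
  have hrp : r ≤ p := hr ▸ min_le_left _ _
  have hr2 : r ≤ 2 := hr ▸ min_le_right _ _
  have hp0 : 0 < p := lt_trans one_pos hp
  set h : ℝ → ℝ := fun t => phi p (t ^ (1 / r)) with hh
  set d : ℝ → ℝ := fun t =>
    if t ≤ 1 then 1 / r * t ^ (2 / r - 1) else 1 / r * t ^ (p / r - 1) with hd
  have h2r : (0:ℝ) ≤ 2 / r - 1 := by
    rw [sub_nonneg, le_div_iff₀ hr0]; linarith
  have hpr : (0:ℝ) ≤ p / r - 1 := by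
    rw [sub_nonneg, le_div_iff₀ hr0]; linarith
  -- derivative of the two pieces
  have hf1 : ∀ t : ℝ, t ≠ 0 → HasDerivAt (fun s : ℝ => s ^ (2 / r) / 2)
      (1 / r * t ^ (2 / r - 1)) t := by
    intro t ht
    have := (Real.hasDerivAt_rpow_const (p := 2 / r) (Or.inl ht)).div_const 2
    refine this.congr_deriv ?_
    ring
  have hf2 : ∀ t : ℝ, t ≠ 0 → HasDerivAt (fun s : ℝ => 1 / p * s ^ (p / r) - 1 / p + 1 / 2)
      (1 / r * t ^ (p / r - 1)) t := by
    intro t ht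
    have := (((Real.hasDerivAt_rpow_const (p := p / r) (Or.inl ht)).const_mul
      (1 / p)).sub_const (1 / p)).add_const (1 / 2)
    refine this.congr_deriv ?_
    field_simp
  -- `h` has derivative `d` on `Ioi 0`
  have hderiv : ∀ t ∈ Set.Ioi (0:ℝ), HasDerivAt h (d t) t := by
    intro t ht
    have ht0 : (0:ℝ) < t := ht
    rcases lt_trichotomy t 1 with h1 | h1 | h1
    · have hev : h =ᶠ[nhds t] fun s : ℝ => s ^ (2 / r) / 2 := by
        filter_upwards [IsOpen.mem_nhds isOpen_Ioo (Set.mem_Ioo.2 ⟨ht0, h1⟩)] with s hs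
        exact phi_rpow_left hr0 (le_of_lt hs.1) (le_of_lt hs.2)
      rw [hd]; simp only [if_pos h1.le]
      exact (hf1 t ht0.ne').congr_of_eventuallyEq hev
    · subst h1
      have e1 : HasDerivWithinAt h (1 / r * (1:ℝ) ^ (2 / r - 1)) (Set.Icc 0 1) 1 := by
        refine ((hf1 1 one_ne_zero).hasDerivWithinAt).congr ?_ ?_
        · intro s hs; exact phi_rpow_left hr0 hs.1 hs.2
        · exact phi_rpow_left hr0 zero_le_one le_rfl
      have e2 : HasDerivWithinAt h (1 / r * (1:ℝ) ^ (p / r - 1)) (Set.Ici 1) 1 := by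
        refine ((hf2 1 one_ne_zero).hasDerivWithinAt).congr ?_ ?_
        · intro s hs; exact phi_rpow_right hr0 hp0 hs
        · exact phi_rpow_right hr0 hp0 le_rfl
      rw [Real.one_rpow] at e1 e2
      have := e1.union e2
      rw [Set.Icc_union_Ici_eq_Ici zero_le_one] at this
      have hD := this.hasDerivAt (Ici_mem_nhds one_pos)
      rw [hd]; simp only [if_pos le_rfl, Real.one_rpow]
      exact hD
    · have hev : h =ᶠ[nhds t] fun s : ℝ => 1 / p * s ^ (p / r) - 1 / p + 1 / 2 := by
        filter_upwards [IsOpen.mem_nhds isOpen_Ioi (Set.mem_Ioi.2 h1)] with s hs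
        exact phi_rpow_right hr0 hp0 (le_of_lt hs)
      rw [hd]; simp only [if_neg (not_le.2 h1)]
      exact (hf2 t ht0.ne').congr_of_eventuallyEq hev
  have hdiff : DifferentiableOn ℝ h (Set.Ioi 0) := fun t ht =>
    (hderiv t ht).differentiableAt.differentiableWithinAt
  have hderiv_eq : ∀ t ∈ Set.Ioi (0:ℝ), deriv h t = d t := fun t ht => (hderiv t ht).deriv
  -- continuity of `h` on `Ici 0`
  have hcont : ContinuousOn h (Set.Ici 0) := by
    intro t ht
    rcases eq_or_lt_of_le (Set.mem_Ici.1 ht) with h0 | h0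
    · subst h0
      have c1 : ContinuousWithinAt (fun s : ℝ => s ^ (2 / r) / 2) (Set.Icc 0 1) 0 :=
        ((Real.continuousAt_rpow_const 0 (2 / r) (Or.inr (by positivity))).div_const
          2).continuousWithinAt
      have c2 : ContinuousWithinAt h (Set.Icc 0 1) 0 := by
        refine c1.congr ?_ ?_
        · intro s hs; exact phi_rpow_left hr0 hs.1 hs.2
        · exact phi_rpow_left hr0 le_rfl zero_le_one
      refine c2.mono_of_mem_nhdsWithin ?_
      have : Set.Icc (0:ℝ) 1 = Set.Ici 0 ∩ Set.Iic 1 := (Set.Ici_inter_Iic).symm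
      rw [this]
      exact Filter.inter_mem self_mem_nhdsWithin
        (mem_nhdsWithin_of_mem_nhds (Iic_mem_nhds one_pos))
    · exact (hderiv t h0).differentiableAt.continuousAt.continuousWithinAt
  -- monotonicity of `d`
  have hmono_d : ∀ x ∈ Set.Ioi (0:ℝ), ∀ y ∈ Set.Ioi (0:ℝ), x ≤ y → d x ≤ d y := by
    intro x hx y hy hxy
    have hx0 : (0:ℝ) < x := hx
    rw [hd]
    by_cases hy1 : y ≤ 1
    · have hx1 : x ≤ 1 := le_trans hxy hy1
      simp only [if_pos hx1, if_pos hy1]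
      exact mul_le_mul_of_nonneg_left (Real.rpow_le_rpow hx0.le hxy h2r) (by positivity)
    · by_cases hx1 : x ≤ 1
      · simp only [if_pos hx1, if_neg hy1]
        have b1 : x ^ (2 / r - 1) ≤ 1 := Real.rpow_le_one hx0.le hx1 h2r
        have b2 : (1:ℝ) ≤ y ^ (p / r - 1) :=
          Real.one_le_rpow (le_of_lt (not_le.1 hy1)) hpr
        have := le_trans b1 b2
        exact mul_le_mul_of_nonneg_left this (by positivity)
      · simp only [if_neg hx1, if_neg hy1]
        exact mul_le_mul_of_nonneg_left (Real.rpow_le_rpow hx0.le hxy hpr) (by positivity)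
  -- convexity of `h` on `Ici 0`
  have hconv : ConvexOn ℝ (Set.Ici 0) h := by
    refine MonotoneOn.convexOn_of_deriv (convex_Ici 0) hcont ?_ ?_
    · rwa [interior_Ici]
    · rw [interior_Ici]
      intro x hx y hy hxy
      rw [hderiv_eq x hx, hderiv_eq y hy]
      exact hmono_d x hx y hy hxy
  -- monotonicity of `h` on `Ici 0`
  have hmono : MonotoneOn h (Set.Ici 0) := by
    refine monotoneOn_of_deriv_nonneg (convex_Ici 0) hcont ?_ ?_
    · rwa [interior_Ici]
    · rw [interior_Ici]
      intro x hx
      rw [hderiv_eq x hx]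
      have hx0 : (0:ℝ) < x := hx
      rw [hd]
      dsimp only
      split_ifs <;> positivity
  -- conclude by composition with `|·|`
  have habs : ConvexOn ℝ (Set.univ : Set ℝ) (fun x : ℝ => |x|) := by
    have := convexOn_univ_norm (E := ℝ)
    exact this
  have himg : (fun x : ℝ => |x|) '' Set.univ = Set.Ici 0 := by
    rw [Set.image_univ]
    ext y
    simp only [Set.mem_range, Set.mem_Ici]
    constructor
    · rintro ⟨x, rfl⟩; exact abs_nonneg x
    · intro hy; exact ⟨y, abs_of_nonneg hy⟩
  have := ConvexOn.comp (g := h) (f := fun x : ℝ => |x|) (s := Set.univ)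
    (himg ▸ hconv) habs (himg ▸ hmono)
  exact this
end

section
/- Let p, q > 1 with 1/p + 1/q = 1, let g be a standard Gaussian random variable (g ~ N(0,1)), and set ξ = |g|^{2/q} − E|g|^{2/q}. Then ξ is φ_p-subgaussian, i.e., τ_{φ_p}(ξ) < ∞: there exists a ≥ 0 such that ln E exp(λξ) ≤ φ_p(aλ) for all λ ∈ ℝ. -/
open MeasureTheory Real ProbabilityTheory
open scoped ENNReal NNReal

lemma exp_le_one_add_self_add_sq (t : ℝ) : rexp t ≤ 1 + t + t^2 * rexp |t| := by
  rcases le_or_gt 0 t with h | h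
  · rw [abs_of_nonneg h]
    rcases le_or_gt 1 t with h1 | h1
    · nlinarith [Real.exp_pos t, sq_nonneg (t-1)]
    · have h2 : (1 - t) * rexp t ≤ 1 := by
        have ha := Real.add_one_le_exp (-t)
        have hb := mul_le_mul_of_nonneg_right ha (Real.exp_pos t).le
        rw [← Real.exp_add] at hb
        simp only [neg_add_cancel, Real.exp_zero] at hb
        nlinarith [hb]
      nlinarith [mul_le_mul_of_nonneg_right h2 (by linarith : (0:ℝ) ≤ 1 + t)]
  · rw [abs_of_neg h]
    set s := -t with hs
    have hs0 : 0 < s := by simp only [hs]; linarith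
    have h4 : rexp (-s) * (1 + s) ≤ 1 := by
      have ha := Real.add_one_le_exp s
      have hb := mul_le_mul_of_nonneg_left ha (Real.exp_pos (-s)).le
      rw [← Real.exp_add] at hb
      simp only [neg_add_cancel, Real.exp_zero] at hb
      nlinarith [hb]
    have key : rexp (-s) - 1 + s ≤ s^2 := by
      nlinarith [h4, mul_pos hs0 (mul_pos hs0 hs0), Real.exp_pos (-s)]
    have h5 : (1:ℝ) ≤ rexp s := Real.one_le_exp hs0.le
    have ht : t = -s := by simp [hs]
    rw [ht]
    nlinarith [key, sq_nonneg s, h5]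

lemma gauss_eq : (gaussianReal 0 1 : Measure ℝ) = volume.withDensity (gaussianPDF 0 1) :=
  gaussianReal_of_var_ne_zero 0 one_ne_zero

lemma gauss_integrable_iff {f : ℝ → ℝ} :
    Integrable f (gaussianReal 0 1) ↔
      Integrable (fun x => f x * gaussianPDFReal 0 1 x) volume := by
  rw [gauss_eq, integrable_withDensity_iff (measurable_gaussianPDF 0 1)
    (ae_of_all _ fun x => ENNReal.ofReal_lt_top)]
  simp only [gaussianPDF, ENNReal.toReal_ofReal (gaussianPDFReal_nonneg 0 1 _)]

lemma gauss_integral_eq (f : ℝ → ℝ) :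
    ∫ x, f x ∂(gaussianReal 0 1) = ∫ x, gaussianPDFReal 0 1 x * f x := by
  rw [gauss_eq]
  have h1 : (gaussianPDF 0 1) = fun x => ((gaussianPDFReal 0 1 x).toNNReal : ℝ≥0∞) := rfl
  rw [h1, integral_withDensity_eq_integral_smul
    ((measurable_gaussianPDFReal 0 1).real_toNNReal)]
  congr 1
  ext x
  simp [NNReal.smul_def, Real.coe_toNNReal _ (gaussianPDFReal_nonneg 0 1 x)]

lemma gauss_pdf_eq (x : ℝ) :
    gaussianPDFReal 0 1 x = (Real.sqrt (2 * π))⁻¹ * rexp (-(2⁻¹) * x ^ 2) := by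
  simp only [gaussianPDFReal, NNReal.coe_one, mul_one, sub_zero]
  congr 1
  ring

lemma integrable_exp_quarter :
    Integrable (fun x : ℝ => rexp (x ^ 2 / 4)) (gaussianReal 0 1) := by
  rw [gauss_integrable_iff]
  have : (fun x : ℝ => rexp (x ^ 2 / 4) * gaussianPDFReal 0 1 x)
      = fun x => (Real.sqrt (2 * π))⁻¹ * rexp (-(4⁻¹) * x ^ 2) := by
    ext x
    rw [gauss_pdf_eq, ← mul_assoc, mul_comm (rexp _), mul_assoc, ← Real.exp_add]
    congr 2
    ring
  rw [this]
  exact (integrable_exp_neg_mul_sq (by norm_num)).const_mul _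

lemma integral_exp_quarter_le :
    ∫ x, rexp (x ^ 2 / 4) ∂(gaussianReal 0 1) ≤ 3 / 2 := by
  rw [gauss_integral_eq]
  have h0 : (fun x : ℝ => gaussianPDFReal 0 1 x * rexp (x ^ 2 / 4))
      = fun x => (Real.sqrt (2 * π))⁻¹ * rexp (-(4⁻¹) * x ^ 2) := by
    ext x
    rw [gauss_pdf_eq, mul_assoc, ← Real.exp_add]
    congr 2
    ring
  rw [h0, integral_const_mul]
  have h1 : ∫ x : ℝ, rexp (-(4⁻¹) * x ^ 2) = Real.sqrt (π / 4⁻¹) := integral_gaussian _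
  rw [h1]
  have hpi : 0 < π := Real.pi_pos
  have h2 : Real.sqrt (π / 4⁻¹) ≤ 3 / 2 * Real.sqrt (2 * π) := by
    rw [show (3:ℝ)/2 * Real.sqrt (2*π) = Real.sqrt ((3/2 * Real.sqrt (2*π))^2) by
      rw [Real.sqrt_sq (by positivity)]]
    apply Real.sqrt_le_sqrt
    rw [mul_pow, Real.sq_sqrt (by positivity)]
    have : π / 4⁻¹ = 4 * π := by ring
    rw [this]
    nlinarith
  calc (Real.sqrt (2*π))⁻¹ * Real.sqrt (π / 4⁻¹)
      ≤ (Real.sqrt (2*π))⁻¹ * (3/2 * Real.sqrt (2*π)) := by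
        apply mul_le_mul_of_nonneg_left h2 (by positivity)
    _ = 3/2 := by
        field_simp

lemma young_aux {p q : ℝ} (hp : 1 < p) (hq : 1 < q) (hpq : 1 / p + 1 / q = 1)
    {c : ℝ} (hc : 0 < c) :
    ∃ C : ℝ, 0 ≤ C ∧ ∀ l x : ℝ, l * |x| ^ (2 / q) ≤ C * |l| ^ p + c * x ^ 2 := by
  have hq0 : (0:ℝ) < q := by linarith
  have hp0 : (0:ℝ) < p := by linarith
  have hconj : Real.HolderConjugate p q := ⟨by rw [inv_one, ← one_div, ← one_div]; exact hpq, hp0, hq0⟩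
  set b : ℝ := (1 / (c * q)) ^ (1 / q) with hb
  have hb0 : 0 < b := Real.rpow_pos_of_pos (by positivity) _
  have hbq : b ^ q = 1 / (c * q) := by
    rw [hb, ← Real.rpow_mul (by positivity), one_div_mul_cancel hq0.ne', Real.rpow_one]
  refine ⟨b ^ p / p, by positivity, fun l x => ?_⟩
  have hu0 : (0:ℝ) ≤ |x| ^ (2 / q) := Real.rpow_nonneg (abs_nonneg x) _
  have huq : (|x| ^ (2 / q)) ^ q = x ^ 2 := by
    rw [← Real.rpow_mul (abs_nonneg x), div_mul_cancel₀ 2 hq0.ne',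
      show ((2:ℝ)) = ((2:ℕ):ℝ) by norm_num, Real.rpow_natCast, sq_abs]
  have step1 : l * |x| ^ (2 / q) ≤ (b * |l|) * (|x| ^ (2 / q) / b) := by
    have he : (b * |l|) * (|x| ^ (2 / q) / b) = |l| * |x| ^ (2 / q) := by
      field_simp
    rw [he]
    exact mul_le_mul_of_nonneg_right (le_abs_self l) hu0
  have step2 := Real.young_inequality_of_nonneg
    (mul_nonneg hb0.le (abs_nonneg l)) (div_nonneg hu0 hb0.le) hconj
  have e1 : (b * |l|) ^ p = b ^ p * |l| ^ p := Real.mul_rpow hb0.le (abs_nonneg l)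
  have e2 : (|x| ^ (2 / q) / b) ^ q = (x ^ 2) * (c * q) := by
    rw [Real.div_rpow hu0 hb0.le, huq, hbq]
    field_simp
  calc l * |x| ^ (2 / q) ≤ (b * |l|) * (|x| ^ (2 / q) / b) := step1
    _ ≤ (b * |l|) ^ p / p + (|x| ^ (2 / q) / b) ^ q / q := step2
    _ = b ^ p / p * |l| ^ p + c * x ^ 2 := by
        rw [e1, e2]
        field_simp

lemma gauss_integrable_of_le {f : ℝ → ℝ}
    (hm : AEStronglyMeasurable f (gaussianReal 0 1)) {B : ℝ}
    (h : ∀ x, |f x| ≤ B * rexp (x ^ 2 / 4)) : Integrable f (gaussianReal 0 1) :=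
  Integrable.mono (integrable_exp_quarter.const_mul B) hm (ae_of_all _ fun x => by
    rw [norm_eq_abs, norm_eq_abs]; exact (h x).trans (le_abs_self _))

lemma gauss_integral_le {f : ℝ → ℝ} (hf : Integrable f (gaussianReal 0 1)) {B : ℝ}
    (hB : 0 ≤ B) (h : ∀ x, f x ≤ B * rexp (x ^ 2 / 4)) :
    ∫ x, f x ∂(gaussianReal 0 1) ≤ B * (3 / 2) := by
  calc ∫ x, f x ∂(gaussianReal 0 1)
      ≤ ∫ x, B * rexp (x ^ 2 / 4) ∂(gaussianReal 0 1) :=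
        integral_mono hf (integrable_exp_quarter.const_mul B) h
    _ = B * ∫ x, rexp (x ^ 2 / 4) ∂(gaussianReal 0 1) := integral_const_mul _ _
    _ ≤ B * (3 / 2) := mul_le_mul_of_nonneg_left integral_exp_quarter_le hB

lemma sq_add_one_le (x : ℝ) : x ^ 2 + 1 ≤ 4 * rexp (x ^ 2 / 4) := by
  have := Real.add_one_le_exp (x ^ 2 / 4); linarith

lemma abs_rpow_le_sq_add_one {q : ℝ} (hq : 1 < q) (x : ℝ) : |x| ^ (2 / q) ≤ x ^ 2 + 1 := by
  have hq0 : (0:ℝ) < q := by linarith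
  rcases le_or_gt (|x|) 1 with h | h
  · have h1 : |x| ^ (2 / q) ≤ 1 := Real.rpow_le_one (abs_nonneg x) h (by positivity)
    nlinarith [sq_nonneg x]
  · have h1 : |x| ^ (2 / q) ≤ |x| ^ (2:ℝ) :=
      Real.rpow_le_rpow_of_exponent_le h.le (by rw [div_le_iff₀ hq0]; linarith)
    have h2 : |x| ^ (2:ℝ) = x ^ 2 := by
      rw [show ((2:ℝ)) = ((2:ℕ):ℝ) by norm_num, Real.rpow_natCast, sq_abs]
    nlinarith [h1, h2]

set_option maxHeartbeats 1000000 in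
/-- If `g ∼ N(0,1)` and `1/p + 1/q = 1` with `p, q > 1`, then
`ξ = |g|^{2/q} − E|g|^{2/q}` is `φ_p`-subgaussian: there is `a ≥ 0` such that
`ln E exp(λξ) ≤ φ_p(aλ)` for all `λ` (stated in exponentiated form, which also
encodes finiteness of `E exp(λξ)`). -/
theorem abs_gaussian_rpow_centered_is_phi_subgaussian
    (p q : ℝ) (hp : 1 < p) (hq : 1 < q) (hpq : 1 / p + 1 / q = 1)
    (ξ : ℝ → ℝ)
    (hξ : ∀ x : ℝ, ξ x = |x| ^ (2 / q) - ∫ y : ℝ, |y| ^ (2 / q) ∂(gaussianReal 0 1)) :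
    ∃ a : ℝ, 0 ≤ a ∧ ∀ l : ℝ,
      ∫⁻ x, ENNReal.ofReal (Real.exp (l * ξ x)) ∂(gaussianReal 0 1) ≤
        ENNReal.ofReal (Real.exp (phi p (a * l))) := by
  have hq0 : (0:ℝ) < q := by linarith
  have hp0 : (0:ℝ) < p := by linarith
  set m : ℝ := ∫ y : ℝ, |y| ^ (2 / q) ∂(gaussianReal 0 1) with hmdef
  set M : ℝ := |m| with hMdef
  have hM0 : 0 ≤ M := abs_nonneg m
  have hu_cont : Continuous fun x : ℝ => |x| ^ (2 / q) :=
    (Real.continuous_rpow_const (by positivity)).comp continuous_abs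
  have hu_nonneg : ∀ x : ℝ, 0 ≤ |x| ^ (2 / q) := fun x => Real.rpow_nonneg (abs_nonneg x) _
  have hξ_cont : Continuous ξ := by
    have he : ξ = fun x => |x| ^ (2 / q) - m := funext hξ
    rw [he]; exact hu_cont.sub continuous_const
  obtain ⟨C, hC0, hC⟩ := young_aux hp hq hpq (c := 1/4) (by norm_num)
  obtain ⟨C₈, hC₈0, hC₈'⟩ := young_aux hp hq hpq (c := 1/8) (by norm_num)
  have hC₈ : ∀ x : ℝ, |x| ^ (2 / q) ≤ C₈ + x ^ 2 / 8 := by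
    intro x
    have h := hC₈' 1 x
    rw [one_mul, abs_one, Real.one_rpow, mul_one] at h
    linarith
  -- integrability of |x|^(2/q)
  have h_int_u : Integrable (fun x : ℝ => |x| ^ (2 / q)) (gaussianReal 0 1) := by
    apply gauss_integrable_of_le hu_cont.aestronglyMeasurable (B := 4)
    intro x
    rw [abs_of_nonneg (hu_nonneg x)]
    exact (abs_rpow_le_sq_add_one hq x).trans (sq_add_one_le x)
  have h_int_ξ : Integrable ξ (gaussianReal 0 1) :=
    (h_int_u.sub (integrable_const m)).congr (ae_of_all _ fun x => (hξ x).symm)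
  have hξ_abs : ∀ x : ℝ, |ξ x| ≤ |x| ^ (2 / q) + M := by
    intro x
    rw [hξ x, sub_eq_add_neg]
    calc |(|x| ^ (2 / q)) + -m| ≤ |(|x| ^ (2 / q))| + |(-m)| := abs_add_le _ _
      _ = |x| ^ (2 / q) + M := by rw [abs_neg, abs_of_nonneg (hu_nonneg x)]
  -- the function g = ξ² e^{|ξ|} and its integrability
  set g : ℝ → ℝ := fun x => (ξ x) ^ 2 * rexp |ξ x| with hgdef
  have hg_nonneg : ∀ x, 0 ≤ g x := fun x => mul_nonneg (sq_nonneg _) (Real.exp_pos _).le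
  have hg_bound : ∀ x : ℝ, g x ≤ ((512 + 2*(1+M)^2) * rexp (M + C₈)) * rexp (x ^ 2 / 4) := by
    intro x
    have hb1 : |ξ x| ≤ x ^ 2 + 1 + M := by
      have := hξ_abs x; have := abs_rpow_le_sq_add_one hq x; linarith
    have hb2 : rexp |ξ x| ≤ rexp (M + C₈) * rexp (x ^ 2 / 8) := by
      rw [← Real.exp_add]
      apply Real.exp_le_exp.mpr
      have := hξ_abs x; have := hC₈ x; linarith
    have hb3 : (ξ x) ^ 2 ≤ (x ^ 2 + 1 + M) ^ 2 := by
      have h := hb1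
      nlinarith [abs_nonneg (ξ x), sq_abs (ξ x)]
    have h16 : x ^ 2 ≤ 16 * rexp (x ^ 2 / 16) := by
      have := Real.add_one_le_exp (x ^ 2 / 16); linarith
    have hee : rexp (x ^ 2 / 16) * rexp (x ^ 2 / 16) = rexp (x ^ 2 / 8) := by
      rw [← Real.exp_add]; congr 1; ring
    have h1e : (1:ℝ) ≤ rexp (x ^ 2 / 8) := Real.one_le_exp (by positivity)
    have hx4 : x ^ 4 ≤ 256 * rexp (x ^ 2 / 8) := by
      nlinarith [mul_le_mul h16 h16 (sq_nonneg x) (by positivity : (0:ℝ) ≤ 16 * rexp (x ^ 2 / 16))]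
    have hb4 : (x ^ 2 + 1 + M) ^ 2 ≤ (512 + 2*(1+M)^2) * rexp (x ^ 2 / 8) := by
      nlinarith [sq_nonneg (x ^ 2 - (1 + M)), hx4, h1e, sq_nonneg (1+M)]
    have hquarter : rexp (x ^ 2 / 8) * rexp (x ^ 2 / 8) = rexp (x ^ 2 / 4) := by
      rw [← Real.exp_add]; congr 1; ring
    calc g x = (ξ x) ^ 2 * rexp |ξ x| := rfl
      _ ≤ ((x ^ 2 + 1 + M) ^ 2) * (rexp (M + C₈) * rexp (x ^ 2 / 8)) := by
          apply mul_le_mul hb3 hb2 (Real.exp_pos _).le (by positivity)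
      _ ≤ ((512 + 2*(1+M)^2) * rexp (x ^ 2 / 8)) * (rexp (M + C₈) * rexp (x ^ 2 / 8)) := by
          apply mul_le_mul_of_nonneg_right hb4 (by positivity)
      _ = ((512 + 2*(1+M)^2) * rexp (M + C₈)) * rexp (x ^ 2 / 4) := by
          rw [← hquarter]; ring
  have hg_cont : Continuous g := by
    apply (hξ_cont.pow 2).mul
    exact Real.continuous_exp.comp hξ_cont.abs
  have h_int_g : Integrable g (gaussianReal 0 1) := by
    apply gauss_integrable_of_le hg_cont.aestronglyMeasurable
      (B := (512 + 2*(1+M)^2) * rexp (M + C₈))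
    intro x
    rw [abs_of_nonneg (hg_nonneg x)]
    exact hg_bound x
  set K : ℝ := ∫ x, g x ∂(gaussianReal 0 1) with hKdef
  have hK0 : 0 ≤ K := integral_nonneg hg_nonneg
  clear_value m M g K
  -- mean zero
  have h_mean : ∫ x, ξ x ∂(gaussianReal 0 1) = 0 := by
    have he : ∀ x : ℝ, ξ x = |x| ^ (2 / q) - m := hξ
    rw [show (fun x => ξ x) = fun x : ℝ => |x| ^ (2 / q) - m from funext he]
    rw [integral_sub h_int_u (integrable_const m), integral_const]
    simp [hmdef]
  -- integrability of exp(l ξ) and pointwise bound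
  have hpt2 : ∀ (l : ℝ) (x : ℝ),
      rexp (l * ξ x) ≤ rexp (C * |l| ^ p + M * |l|) * rexp (x ^ 2 / 4) := by
    intro l x
    rw [← Real.exp_add]
    apply Real.exp_le_exp.mpr
    have h1 := hC l x
    have h2 : -(l * m) ≤ M * |l| := by
      calc -(l * m) ≤ |l * m| := neg_le_abs _
        _ = |l| * M := by rw [abs_mul, hMdef]
        _ = M * |l| := mul_comm _ _
    have h3 : l * ξ x = l * (|x| ^ (2 / q)) + -(l * m) := by rw [hξ x]; ring
    linarith
  have h_int_exp : ∀ l : ℝ, Integrable (fun x => rexp (l * ξ x)) (gaussianReal 0 1) := by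
    intro l
    have hc : Continuous fun x : ℝ => rexp (l * ξ x) :=
      Real.continuous_exp.comp (continuous_const.mul hξ_cont)
    apply gauss_integrable_of_le hc.aestronglyMeasurable
      (B := rexp (C * |l| ^ p + M * |l|))
    intro x
    rw [abs_of_nonneg (Real.exp_pos _).le]
    exact hpt2 l x
  have bound2 : ∀ l : ℝ, ∫ x, rexp (l * ξ x) ∂(gaussianReal 0 1) ≤
      rexp (C * |l| ^ p + M * |l|) * (3 / 2) :=
    fun l => gauss_integral_le (h_int_exp l) (Real.exp_pos _).le (hpt2 l)
  have bound1 : ∀ l : ℝ, |l| ≤ 1 → ∫ x, rexp (l * ξ x) ∂(gaussianReal 0 1) ≤ 1 + K * l ^ 2 := by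
    intro l hl
    have hpt : ∀ x, rexp (l * ξ x) ≤ 1 + l * ξ x + l ^ 2 * g x := by
      intro x
      have h1 := exp_le_one_add_self_add_sq (l * ξ x)
      have h2 : (l * ξ x) ^ 2 * rexp |l * ξ x| ≤ l ^ 2 * g x := by
        have ha : |l * ξ x| ≤ |ξ x| := by
          rw [abs_mul]
          calc |l| * |ξ x| ≤ 1 * |ξ x| := mul_le_mul_of_nonneg_right hl (abs_nonneg _)
            _ = |ξ x| := one_mul _
        calc (l * ξ x) ^ 2 * rexp |l * ξ x| ≤ (l * ξ x) ^ 2 * rexp |ξ x| :=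
              mul_le_mul_of_nonneg_left (Real.exp_le_exp.mpr ha) (sq_nonneg _)
          _ = l ^ 2 * g x := by rw [hgdef]; ring
      linarith
    have hint1 : Integrable (fun x => 1 + l * ξ x + l ^ 2 * g x) (gaussianReal 0 1) :=
      ((integrable_const 1).add (h_int_ξ.const_mul l)).add (h_int_g.const_mul (l ^ 2))
    calc ∫ x, rexp (l * ξ x) ∂(gaussianReal 0 1)
        ≤ ∫ x, (1 + l * ξ x + l ^ 2 * g x) ∂(gaussianReal 0 1) :=
          integral_mono (h_int_exp l) hint1 hpt
      _ = 1 + K * l ^ 2 := by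
          have e1 : ∫ x, (1 + l * ξ x + l ^ 2 * g x) ∂(gaussianReal 0 1)
              = (∫ x, (1 + l * ξ x) ∂(gaussianReal 0 1))
                + ∫ x, l ^ 2 * g x ∂(gaussianReal 0 1) :=
            integral_add ((integrable_const 1).add (h_int_ξ.const_mul l))
              (h_int_g.const_mul (l ^ 2))
          have e2 : ∫ x, (1 + l * ξ x) ∂(gaussianReal 0 1)
              = (∫ _x, (1:ℝ) ∂(gaussianReal 0 1)) + ∫ x, l * ξ x ∂(gaussianReal 0 1) :=
            integral_add (integrable_const 1) (h_int_ξ.const_mul l)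
          rw [e1, e2, integral_const_mul, integral_const_mul, h_mean, integral_const]
          simp [hKdef]
          ring
  -- numeric constant
  have h32 : (3/2 : ℝ) < rexp (1/2) := by
    have hsq : rexp (1/2) * rexp (1/2) = rexp 1 := by rw [← Real.exp_add]; norm_num
    nlinarith [Real.exp_one_gt_d9, Real.exp_pos (1/2 : ℝ)]
  have hlog12 : Real.log (3/2) < 1/2 := (Real.log_lt_iff_lt_exp (by norm_num)).mpr h32
  have hlog0 : 0 ≤ Real.log (3/2) := Real.log_nonneg (by norm_num)
  set δ : ℝ := 1/2 - Real.log (3/2) with hδdef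
  have hδ : 0 < δ := by rw [hδdef]; linarith
  clear_value δ
  -- choice of a
  set a : ℝ := 1 + Real.sqrt (2 * K) + (C + M) * (p + 1/δ) with hadef
  have hsqrt0 : 0 ≤ Real.sqrt (2 * K) := Real.sqrt_nonneg _
  have hCM0 : 0 ≤ C + M := by linarith
  have hpδ0 : 0 ≤ p + 1/δ := by positivity
  have ha1 : 1 ≤ a := by
    rw [hadef]; nlinarith [mul_nonneg hCM0 hpδ0]
  have ha0 : 0 ≤ a := by linarith
  have ha0' : 0 < a := by linarith
  have haK : 2 * K ≤ a ^ 2 := by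
    have h1 : Real.sqrt (2 * K) ≤ a := by
      rw [hadef]; nlinarith [mul_nonneg hCM0 hpδ0]
    calc 2 * K = Real.sqrt (2 * K) ^ 2 := (Real.sq_sqrt (by linarith)).symm
      _ ≤ a ^ 2 := pow_le_pow_left₀ (Real.sqrt_nonneg _) h1 2
  have hap : p * (C + M) ≤ a := by
    rw [hadef]
    have h1 : (C + M) * p ≤ (C + M) * (p + 1/δ) := by
      apply mul_le_mul_of_nonneg_left _ hCM0
      have : 0 ≤ 1/δ := by positivity
      linarith
    nlinarith
  have haδ : C + M ≤ δ * a := by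
    have hδδ : δ * (1/δ) = 1 := by field_simp
    have h1 : (C + M) * (1/δ) ≤ a := by
      rw [hadef]
      have h2 : 0 ≤ (C + M) * p := mul_nonneg hCM0 hp0.le
      nlinarith
    calc C + M = δ * ((C + M) * (1/δ)) := by field_simp
      _ ≤ δ * a := mul_le_mul_of_nonneg_left h1 hδ.le
  clear_value a
  refine ⟨a, ha0, fun l => ?_⟩
  rw [← ofReal_integral_eq_lintegral_ofReal (h_int_exp l)
    (ae_of_all _ fun x => (Real.exp_pos _).le)]
  apply ENNReal.ofReal_le_ofReal
  by_cases hcase : |a * l| ≤ 1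
  · rw [phi, if_pos hcase]
    have hl1 : |l| ≤ 1 := by
      have h1 : |l| ≤ |a * l| := by
        rw [abs_mul, abs_of_nonneg ha0]
        nlinarith [abs_nonneg l]
      linarith
    calc ∫ x, rexp (l * ξ x) ∂(gaussianReal 0 1) ≤ 1 + K * l ^ 2 := bound1 l hl1
      _ ≤ rexp (K * l ^ 2) := by
          have := Real.add_one_le_exp (K * l ^ 2); linarith
      _ ≤ rexp ((a * l) ^ 2 / 2) := by
          apply Real.exp_le_exp.mpr
          have h1 : 2 * K * l ^ 2 ≤ a ^ 2 * l ^ 2 := mul_le_mul_of_nonneg_right haK (sq_nonneg l)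
          have h2 : (a * l) ^ 2 = a ^ 2 * l ^ 2 := by ring
          linarith
  · push_neg at hcase
    rw [phi, if_neg (not_le.mpr hcase)]
    have hat : 1 < a * |l| := by rwa [abs_mul, abs_of_nonneg ha0] at hcase
    have ht0 : 0 < |l| := by
      by_contra h
      push_neg at h
      have : a * |l| ≤ 0 := mul_nonpos_of_nonneg_of_nonpos ha0 h
      linarith
    set t : ℝ := |l| with htdef
    set A : ℝ := a ^ p with hAdef
    set T : ℝ := t ^ p with hTdef
    have hA0 : 0 < A := Real.rpow_pos_of_pos ha0' p
    have hT0 : 0 < T := Real.rpow_pos_of_pos ht0 p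
    have hAa : a ≤ A := by
      calc a = a ^ (1:ℝ) := (Real.rpow_one a).symm
        _ ≤ a ^ p := Real.rpow_le_rpow_of_exponent_le ha1 hp.le
    have hmulrpow : (a * t) ^ p = A * T := Real.mul_rpow ha0 ht0.le
    have hAT1 : 1 ≤ A * T := by
      rw [← hmulrpow]
      calc (1:ℝ) = 1 ^ p := (Real.one_rpow p).symm
        _ ≤ (a * t) ^ p := Real.rpow_le_rpow (by norm_num) hat.le hp0.le
    have hatAT : a * t ≤ A * T := by
      rw [← hmulrpow]
      calc a * t = (a * t) ^ (1:ℝ) := (Real.rpow_one _).symm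
        _ ≤ (a * t) ^ p := Real.rpow_le_rpow_of_exponent_le hat.le hp.le
    have habs : |a * l| ^ p = A * T := by
      rw [abs_mul, abs_of_nonneg ha0, Real.mul_rpow ha0 (abs_nonneg l)]
    -- key arithmetic
    have hTA : 1/A ≤ T := by
      rw [div_le_iff₀ hA0]
      linarith [hAT1]
    have hE0 : 0 ≤ A/p - C - M*A/a := by
      have key : p*C*a + p*M*A ≤ A*a := by
        nlinarith [mul_le_mul_of_nonneg_left hap hA0.le,
          mul_le_mul_of_nonneg_right hAa (mul_nonneg hp0.le hC0)]
      have h := div_nonneg (sub_nonneg.mpr key) (le_of_lt (mul_pos hp0 ha0'))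
      have he : (A*a - (p*C*a + p*M*A))/(p*a) = A/p - C - M*A/a := by
        field_simp
        ring
      linarith [he ▸ h]
    have hEA : 1/p - δ ≤ (A/p - C - M*A/a) * (1/A) := by
      have he : (A/p - C - M*A/a) * (1/A) = 1/p - C/A - M/a := by
        field_simp
      rw [he]
      have h1 : C/A ≤ C/a := by
        apply div_le_div_of_nonneg_left hC0 ha0' hAa
      have h2 : (C+M)/a ≤ δ := by
        rw [div_le_iff₀ ha0']
        linarith [haδ]
      have h3 : C/a + M/a = (C+M)/a := by field_simp
      linarith
    have hETfin : 1/p - δ ≤ (A/p - C - M*A/a) * T :=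
      le_trans hEA (mul_le_mul_of_nonneg_left hTA hE0)
    have hMt : M * t ≤ M * (A*T) / a := by
      have h1 : t ≤ A*T/a := by
        rw [le_div_iff₀ ha0']
        calc t * a = a * t := mul_comm _ _
          _ ≤ A * T := hatAT
      calc M * t ≤ M * (A*T/a) := mul_le_mul_of_nonneg_left h1 hM0
        _ = M * (A*T) / a := by ring
    have hlogval : Real.log (3/2) = 1/2 - δ := by rw [hδdef]; ring
    have harith : C * T + M * t + Real.log (3/2) ≤ 1/p * (A*T) - 1/p + 1/2 := by
      have hexp : (A/p - C - M*A/a) * T = 1/p * (A*T) - C*T - M*(A*T)/a := by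
        ring
      have h4 : 1/p - δ ≤ 1/p * (A*T) - C*T - M*(A*T)/a := by rw [← hexp]; exact hETfin
      rw [hlogval]
      linarith [hMt]
    have hbv : C * |l| ^ p + M * |l| = C * T + M * t := by rw [hTdef, htdef]
    have hstep : (3:ℝ)/2 ≤ rexp ((1/p * (A*T) - 1/p + 1/2) - (C*T + M*t)) := by
      rw [show (3:ℝ)/2 = rexp (Real.log (3/2)) from (Real.exp_log (by norm_num)).symm]
      apply Real.exp_le_exp.mpr
      linarith [harith]
    rw [habs]
    calc ∫ x, rexp (l * ξ x) ∂(gaussianReal 0 1)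
        ≤ rexp (C * T + M * t) * (3/2) := by rw [← hbv]; exact bound2 l
      _ ≤ rexp (C * T + M * t) * rexp ((1/p * (A*T) - 1/p + 1/2) - (C*T + M*t)) :=
          mul_le_mul_of_nonneg_left hstep (Real.exp_pos _).le
      _ = rexp (1/p * (A*T) - 1/p + 1/2) := by rw [← Real.exp_add]; congr 1; ring
end
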